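/- arXiv:2601.08062 — 2 statements merged into one kernel-verified Lean document; each statement's English description precedes it below -/
import Mathlib

section
/- Let ẽ : ℕ × ℕ → ℚ be defined by ẽ(1,0) = 1, ẽ(1,g) = 0 for g ≥ 1, ẽ(0,g) = 0 for all g, and for n ≥ 2 and all g ≥ 0: ẽ(n,g) = (1/2)·[ Σ_{m=1}^{n−1} binom(n,m)·Σ_{ℓ=0}^{g} ẽ(m,ℓ)·ẽ(n−m,g−ℓ) + Σ_{k=3}^{n} (k−2)·Σ over compositions (c_1,…,c_k) of n into k parts and compositions (d_1,…,d_k) of g−1+k into k parts of (n!/(c_1!·c_2!⋯c_k!))·Π_{i=1}^{k} ẽ(c_i,d_i−1) ] + Σ_{k=2}^{n} Σ over compositions (c_1,…,c_k) of n into k parts and compositions (d_1,…,d_k) of g−1+k into k parts of (n!/(c_1!·c_2!⋯c_k!))·Π_{i=1}^{k} ẽ(c_i,d_i−1). (This recursion counts leaf-labeled general galled trees with n leaves and g galls.) Then for every n ≥ 1, ẽ(n, n−1) = C_{n−1}·n!, where C_{n−1} is the (n−1)-st Catalan number. -/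
open Finset

/-- The compositions of `a` into `b` (positive) parts, as functions `Fin b → ℕ`.
Every part of a composition of `a` lies in `[1, a]`, so filtering inside
`Finset.Icc 1 a` captures all compositions. -/
def compositions (a b : ℕ) : Finset (Fin b → ℕ) :=
  (Fintype.piFinset fun _ => Finset.Icc 1 a).filter fun c => ∑ i, c i = a

lemma mem_compositions {a b : ℕ} {c : Fin b → ℕ} (hc : c ∈ compositions a b) :
    (∀ i, 1 ≤ c i) ∧ ∑ i, c i = a := by
  simp only [compositions, Finset.mem_filter, Fintype.mem_piFinset, Finset.mem_Icc] at hc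
  exact ⟨fun i => (hc.1 i).1, hc.2⟩

lemma mem_compositions' {a b : ℕ} {c : Fin b → ℕ} (h1 : ∀ i, 1 ≤ c i)
    (h2 : ∑ i, c i = a) (h3 : ∀ i, c i ≤ a) : c ∈ compositions a b := by
  simp only [compositions, Finset.mem_filter, Fintype.mem_piFinset, Finset.mem_Icc]
  exact ⟨fun i => ⟨h1 i, h3 i⟩, h2⟩

/-- If `ẽ : ℕ × ℕ → ℚ` satisfies `ẽ(1,0)=1`, `ẽ(1,g)=0` for `g ≥ 1`, `ẽ(0,g)=0`, and for
`n ≥ 2` the recursion counting leaf-labeled general galled trees with `n` leaves and `g` galls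
(where `Nat.multinomial univ c = n!/(c₁!⋯c_k!)` for a composition `c` of `n`), then
`ẽ(n, n−1) = C_{n−1}·n!` for all `n ≥ 1`. -/
theorem stmt10 (e : ℕ → ℕ → ℚ)
    (h10 : e 1 0 = 1)
    (h1g : ∀ g, 1 ≤ g → e 1 g = 0)
    (h0g : ∀ g, e 0 g = 0)
    (hrec : ∀ n g, 2 ≤ n →
      e n g = (1 / 2) *
        ((∑ m ∈ Finset.Ico 1 n, (n.choose m : ℚ) *
            ∑ ℓ ∈ Finset.range (g + 1), e m ℓ * e (n - m) (g - ℓ))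
         + (∑ k ∈ Finset.Icc 3 n, ((k : ℚ) - 2) *
             ∑ c ∈ compositions n k, ∑ d ∈ compositions (g + k - 1) k,
               (Nat.multinomial Finset.univ c : ℚ) * ∏ i : Fin k, e (c i) (d i - 1)))
      + (∑ k ∈ Finset.Icc 2 n, ∑ c ∈ compositions n k, ∑ d ∈ compositions (g + k - 1) k,
          (Nat.multinomial Finset.univ c : ℚ) * ∏ i : Fin k, e (c i) (d i - 1))) :
    ∀ n, 1 ≤ n → e n (n - 1) = (catalan (n - 1) : ℚ) * Nat.factorial n := by
  -- Vanishing lemma: e n g = 0 whenever n ≤ g.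
  have hvan : ∀ n g, n ≤ g → e n g = 0 := by
    intro n
    induction n using Nat.strong_induction_on with
    | _ n ih =>
      match n with
      | 0 => intro g _; exact h0g g
      | 1 => intro g hg; exact h1g g hg
      | (N + 2) =>
        intro g hg
        rw [hrec (N + 2) g (by omega)]
        have key : ∀ k, 2 ≤ k → ∀ c ∈ compositions (N + 2) k,
            ∀ d ∈ compositions (g + k - 1) k,
            (Nat.multinomial Finset.univ c : ℚ) * ∏ i : Fin k, e (c i) (d i - 1) = 0 := by
          intro k hk c hc d hd
          obtain ⟨hc1, hc2⟩ := mem_compositions hc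
          obtain ⟨hd1, hd2⟩ := mem_compositions hd
          have hex : ∃ i, c i < d i := by
            by_contra hno
            push_neg at hno
            have hle : ∑ i, d i ≤ ∑ i, c i :=
              Finset.sum_le_sum fun i _ => hno i
            omega
          obtain ⟨i, hi⟩ := hex
          obtain ⟨j, hj⟩ : ∃ j : Fin k, j ≠ i := by
            refine ⟨if (i : ℕ) = 0 then ⟨1, by omega⟩ else ⟨0, by omega⟩, ?_⟩
            by_cases h : (i : ℕ) = 0 <;> simp [h, Fin.ext_iff] <;> omega
          have hci : c i < N + 2 := by
            have h1 := Finset.single_lt_sum hj (Finset.mem_univ i) (Finset.mem_univ j)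
              (hc1 j) (fun _ _ _ => Nat.zero_le _)
            omega
          rw [Finset.prod_eq_zero (Finset.mem_univ i)
            (ih (c i) hci (d i - 1) (by omega))]
          ring
        have hpair : (∑ m ∈ Finset.Ico 1 (N + 2), ((N + 2).choose m : ℚ) *
            ∑ ℓ ∈ Finset.range (g + 1), e m ℓ * e (N + 2 - m) (g - ℓ)) = 0 := by
          refine Finset.sum_eq_zero fun m hm => ?_
          rw [Finset.mem_Ico] at hm
          have : (∑ ℓ ∈ Finset.range (g + 1), e m ℓ * e (N + 2 - m) (g - ℓ)) = 0 := by
            refine Finset.sum_eq_zero fun ℓ hℓ => ?_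
            rw [Finset.mem_range] at hℓ
            by_cases h : m ≤ ℓ
            · rw [ih m hm.2 ℓ h]; ring
            · rw [ih (N + 2 - m) (by omega) (g - ℓ) (by omega)]; ring
          rw [this, mul_zero]
        have h3 : (∑ k ∈ Finset.Icc 3 (N + 2), ((k : ℚ) - 2) *
            ∑ c ∈ compositions (N + 2) k, ∑ d ∈ compositions (g + k - 1) k,
              (Nat.multinomial Finset.univ c : ℚ) * ∏ i : Fin k, e (c i) (d i - 1)) = 0 := by
          refine Finset.sum_eq_zero fun k hk => ?_
          rw [Finset.mem_Icc] at hk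
          rw [Finset.sum_eq_zero fun c hc => Finset.sum_eq_zero fun d hd =>
            key k (by omega) c hc d hd, mul_zero]
        have h2 : (∑ k ∈ Finset.Icc 2 (N + 2), ∑ c ∈ compositions (N + 2) k,
            ∑ d ∈ compositions (g + k - 1) k,
              (Nat.multinomial Finset.univ c : ℚ) * ∏ i : Fin k, e (c i) (d i - 1)) = 0 := by
          refine Finset.sum_eq_zero fun k hk => ?_
          rw [Finset.mem_Icc] at hk
          exact Finset.sum_eq_zero fun c hc => Finset.sum_eq_zero fun d hd =>
            key k (by omega) c hc d hd
        rw [hpair, h3, h2]; ring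
  -- Main statement, by strong induction.
  intro n
  induction n using Nat.strong_induction_on with
  | _ n ih =>
    match n with
    | 0 => intro h; omega
    | 1 => intro _; simpa using h10
    | (N + 2) =>
      intro _
      have hNg : (N + 2 : ℕ) - 1 = N + 1 := by omega
      rw [hNg, hrec (N + 2) (N + 1) (by omega)]
      -- The pairing sum vanishes.
      have hpair : (∑ m ∈ Finset.Ico 1 (N + 2), ((N + 2).choose m : ℚ) *
          ∑ ℓ ∈ Finset.range (N + 1 + 1), e m ℓ * e (N + 2 - m) (N + 1 - ℓ)) = 0 := by
        refine Finset.sum_eq_zero fun m hm => ?_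
        rw [Finset.mem_Ico] at hm
        have : (∑ ℓ ∈ Finset.range (N + 1 + 1), e m ℓ * e (N + 2 - m) (N + 1 - ℓ)) = 0 := by
          refine Finset.sum_eq_zero fun ℓ hℓ => ?_
          rw [Finset.mem_range] at hℓ
          by_cases h : m ≤ ℓ
          · rw [hvan m ℓ h]; ring
          · rw [hvan (N + 2 - m) (N + 1 - ℓ) (by omega)]; ring
        rw [this, mul_zero]
      -- The composition sums with k ≥ 3 parts vanish.
      have key : ∀ k, 3 ≤ k → ∀ c ∈ compositions (N + 2) k,
          ∀ d ∈ compositions (N + 1 + k - 1) k,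
          (Nat.multinomial Finset.univ c : ℚ) * ∏ i : Fin k, e (c i) (d i - 1) = 0 := by
        intro k hk c hc d hd
        obtain ⟨hc1, hc2⟩ := mem_compositions hc
        obtain ⟨hd1, hd2⟩ := mem_compositions hd
        have hex : ∃ i, c i < d i := by
          by_contra hno
          push_neg at hno
          have hle : ∑ i, d i ≤ ∑ i, c i := Finset.sum_le_sum fun i _ => hno i
          omega
        obtain ⟨i, hi⟩ := hex
        rw [Finset.prod_eq_zero (Finset.mem_univ i) (hvan (c i) (d i - 1) (by omega))]
        ring
      have h3 : (∑ k ∈ Finset.Icc 3 (N + 2), ((k : ℚ) - 2) *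
          ∑ c ∈ compositions (N + 2) k, ∑ d ∈ compositions (N + 1 + k - 1) k,
            (Nat.multinomial Finset.univ c : ℚ) * ∏ i : Fin k, e (c i) (d i - 1)) = 0 := by
        refine Finset.sum_eq_zero fun k hk => ?_
        rw [Finset.mem_Icc] at hk
        rw [Finset.sum_eq_zero fun c hc => Finset.sum_eq_zero fun d hd =>
          key k (by omega) c hc d hd, mul_zero]
      -- In the last sum only k = 2 survives.
      have h2 : (∑ k ∈ Finset.Icc 2 (N + 2), ∑ c ∈ compositions (N + 2) k,
          ∑ d ∈ compositions (N + 1 + k - 1) k,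
            (Nat.multinomial Finset.univ c : ℚ) * ∏ i : Fin k, e (c i) (d i - 1))
          = ∑ c ∈ compositions (N + 2) 2, ∑ d ∈ compositions (N + 2) 2,
            (Nat.multinomial Finset.univ c : ℚ) * ∏ i : Fin 2, e (c i) (d i - 1) := by
        rw [Finset.sum_eq_single_of_mem 2 (by rw [Finset.mem_Icc]; omega)]
        · norm_num
        · intro k hk hk2
          rw [Finset.mem_Icc] at hk
          exact Finset.sum_eq_zero fun c hc => Finset.sum_eq_zero fun d hd =>
            key k (by omega) c hc d hd
      rw [hpair, h3, h2]
      -- For fixed c, only d = c survives in the inner sum.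
      have hdiag : ∀ c ∈ compositions (N + 2) 2,
          (∑ d ∈ compositions (N + 2) 2,
            (Nat.multinomial Finset.univ c : ℚ) * ∏ i : Fin 2, e (c i) (d i - 1))
          = (catalan (c 0 - 1) : ℚ) * (catalan (c 1 - 1) : ℚ) * ((N + 2).factorial : ℚ) := by
        intro c hc
        obtain ⟨hc1, hc2⟩ := mem_compositions hc
        rw [Fin.sum_univ_two] at hc2
        rw [Finset.sum_eq_single_of_mem c hc]
        · rw [Fin.prod_univ_two]
          have hc0 : c 0 < N + 2 := by have := hc1 1; omega
          have hc1' : c 1 < N + 2 := by have := hc1 0; omega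
          rw [ih (c 0) hc0 (hc1 0), ih (c 1) hc1' (hc1 1)]
          have hspec := Nat.multinomial_spec (Finset.univ : Finset (Fin 2)) c
          rw [Fin.prod_univ_two, Fin.sum_univ_two, hc2] at hspec
          have hq : ((c 0).factorial : ℚ) * ((c 1).factorial : ℚ) *
              (Nat.multinomial Finset.univ c : ℚ) = ((N + 2).factorial : ℚ) := by
            exact_mod_cast congrArg (Nat.cast : ℕ → ℚ) hspec
          linear_combination (catalan (c 0 - 1) : ℚ) * (catalan (c 1 - 1) : ℚ) * hq
        · intro d hd hdc
          obtain ⟨hd1, hd2⟩ := mem_compositions hd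
          rw [Fin.sum_univ_two] at hd2
          have hex : ∃ i, c i < d i := by
            by_contra hno
            push_neg at hno
            have h0 := hno 0
            have h1 := hno 1
            have : d = c := by
              funext x
              fin_cases x <;> simp <;> omega
            exact hdc this
          obtain ⟨i, hi⟩ := hex
          rw [Finset.prod_eq_zero (Finset.mem_univ i) (hvan (c i) (d i - 1) (by omega))]
          ring
      rw [Finset.sum_congr rfl hdiag]
      -- Reindex compositions of N+2 into 2 parts by the first part minus 1.
      have hre : (∑ c ∈ compositions (N + 2) 2,
          (catalan (c 0 - 1) : ℚ) * (catalan (c 1 - 1) : ℚ) * ((N + 2).factorial : ℚ))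
          = ∑ i ∈ Finset.range (N + 1),
            (catalan i : ℚ) * (catalan (N - i) : ℚ) * ((N + 2).factorial : ℚ) := by
        refine Finset.sum_nbij' (fun c => c 0 - 1) (fun i => ![i + 1, N + 1 - i])
          ?_ ?_ ?_ ?_ ?_
        · intro c hc
          obtain ⟨hc1, hc2⟩ := mem_compositions hc
          rw [Fin.sum_univ_two] at hc2
          rw [Finset.mem_range]
          have := hc1 0; have := hc1 1; omega
        · intro i hi
          rw [Finset.mem_range] at hi
          refine mem_compositions' (fun x => ?_) ?_ (fun x => ?_)
          · fin_cases x <;> simp <;> omega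
          · rw [Fin.sum_univ_two]
            simp
            omega
          · fin_cases x <;> simp <;> omega
        · intro c hc
          obtain ⟨hc1, hc2⟩ := mem_compositions hc
          rw [Fin.sum_univ_two] at hc2
          funext x
          have := hc1 0; have := hc1 1
          fin_cases x <;> simp <;> omega
        · intro i hi
          rw [Finset.mem_range] at hi
          simp
        · intro c hc
          obtain ⟨hc1, hc2⟩ := mem_compositions hc
          rw [Fin.sum_univ_two] at hc2
          have := hc1 0; have := hc1 1
          have h1 : c 1 - 1 = N - (c 0 - 1) := by omega
          rw [h1]
      rw [hre, ← Finset.sum_mul]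
      have hcat : (catalan (N + 1) : ℚ) =
          ∑ i ∈ Finset.range (N + 1), (catalan i : ℚ) * (catalan (N - i) : ℚ) := by
        have h := catalan_succ N
        rw [Fin.sum_univ_eq_sum_range (fun i => catalan i * catalan (N - i)) (N + 1)] at h
        rw [h]
        push_cast
        rfl
      rw [← hcat]
      ring
end

section
/- For t < 1/2 set U(t) = 1 − √(1−2t), and define real functions E_g on (−∞, 1/2) for g ≥ 1 by E_1(t) = t·U(t)^2/(2·(1−U(t))^3) and, for g ≥ 2, E_g(t) = (1/(2(1−U(t))))·[ Σ_{ℓ=1}^{g−1} E_ℓ(t)·E_{g−ℓ}(t) + t·Σ over all tuples (k_1,…,k_{g−1}) ∈ ℕ^{g−1} with k_1+2k_2+…+(g−1)k_{g−1} = g−1 of ((k_1+…+k_{g−1})!/(k_1!⋯k_{g−1}!))·(2U(t) + (k_1+…+k_{g−1}) − 1)/(1−U(t))^{(k_1+…+k_{g−1})+2}·Π_{ℓ=1}^{g−1} E_ℓ(t)^{k_ℓ} ]. (E_g is the exponential generating function of leaf-labeled simplex time-consistent galled trees with g galls.) Then for every g ≥ 1, the limit as t → 1/2 from the left of (1−2t)^{2g−1/2}·E_g(t)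 exists and equals (4g−3)!!/((2g)!·2^g), where (4g−3)!! denotes the double factorial of 4g−3. -/
open Finset

/-- `U(t) = 1 − √(1−2t)`, the EGF of leaf-labeled rooted binary trees. -/
noncomputable def U16 : ℝ → ℝ := fun t => 1 - Real.sqrt (1 - 2 * t)

/-- The set of tuples `(k_1, …, k_{g-1}) ∈ ℕ^{g-1}` with `k_1 + 2k_2 + … + (g-1)k_{g-1} = g-1`,
represented as functions `Fin (g-1) → ℕ` (index `i` corresponds to `k_{i+1}`).  Every such tuple
has `k_ℓ ≤ g-1 < g`, so filtering inside `Finset.range g` captures all solutions. -/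
def weightedTuples (g : ℕ) : Finset (Fin (g - 1) → ℕ) :=
  (Fintype.piFinset fun _ => Finset.range g).filter fun k =>
    ∑ i, (i.1 + 1) * k i = g - 1

open PowerSeries

/-- Even part of Catalan GF: coefficient `n` is `catalan (2n)`. -/
noncomputable def Es : PowerSeries ℝ := PowerSeries.mk fun n => (catalan (2 * n) : ℝ)
/-- Odd part shifted: coefficient `n` is `catalan (2n+1)`. -/
noncomputable def Hs : PowerSeries ℝ := PowerSeries.mk fun n => (catalan (2 * n + 1) : ℝ)

lemma sum_range_even_odd (f : ℕ → ℝ) (n : ℕ) :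
    ∑ i ∈ range (2 * n), f i = ∑ a ∈ range n, f (2 * a) + ∑ a ∈ range n, f (2 * a + 1) := by
  induction n with
  | zero => simp
  | succ n ih =>
    have : 2 * (n + 1) = (2 * n + 1) + 1 := by ring
    rw [this, sum_range_succ, sum_range_succ, sum_range_succ, sum_range_succ, ih]
    ring

lemma sum_range_even_odd' (f : ℕ → ℝ) (n : ℕ) :
    ∑ i ∈ range (2 * n + 1), f i = ∑ a ∈ range (n + 1), f (2 * a) + ∑ a ∈ range n, f (2 * a + 1) := by
  rw [sum_range_succ, sum_range_even_odd, sum_range_succ]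
  ring

/-- catalan recursion as a range sum. -/
lemma catalan_rec (n : ℕ) :
    (catalan (n + 1) : ℝ) = ∑ i ∈ range (n + 1), (catalan i : ℝ) * catalan (n - i) := by
  rw [catalan_succ']
  push_cast
  rw [Finset.Nat.sum_antidiagonal_eq_sum_range_succ_mk]

lemma coeff_XHs (n : ℕ) : (coeff n) (X * Hs) = if n = 0 then 0 else (catalan (2*n - 1) : ℝ) := by
  cases n with
  | zero => simp
  | succ m => rw [coeff_succ_X_mul]; simp [Hs]; congr 1

lemma coeff_mul_mk (f g : ℕ → ℝ) (n : ℕ) :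
    (coeff n) (PowerSeries.mk f * PowerSeries.mk g)
      = ∑ i ∈ range (n + 1), f i * g (n - i) := by
  rw [coeff_mul, Finset.Nat.sum_antidiagonal_eq_sum_range_succ_mk]
  simp

lemma coeff_two_mul (φ : ℝ⟦X⟧) (m : ℕ) : (coeff m) (2 * φ) = 2 * (coeff m) φ := by
  rw [show (2 : ℝ⟦X⟧) = PowerSeries.C 2 from (map_ofNat _ 2).symm, PowerSeries.coeff_C_mul]

/-- `catalan (2n+2) = 2 * Σ_{a<n+1} catalan(2a+1) catalan(2(n−a))`. -/
lemma cat_even (n : ℕ) :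
    (catalan (2 * (n+1)) : ℝ)
      = 2 * ∑ a ∈ range (n+1), (catalan (2*a+1) : ℝ) * catalan (2*(n - a)) := by
  have h1 : 2 * (n+1) = (2*n+1) + 1 := by ring
  rw [h1, catalan_rec]
  have h2 : (2*n+1) + 1 = 2 * (n+1) := by ring
  rw [h2, sum_range_even_odd]
  have e1 : ∑ a ∈ range (n+1), (catalan (2*a) : ℝ) * catalan (2*n+1 - 2*a)
      = ∑ a ∈ range (n+1), (catalan (2*a+1) : ℝ) * catalan (2*(n - a)) := by
    rw [← sum_range_reflect]
    apply sum_congr rfl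
    intro a ha
    rw [mem_range] at ha
    rw [mul_comm]
    have h1 : 2*n+1-2*(n+1-1-a) = 2*a+1 := by omega
    have h2 : 2*(n+1-1-a) = 2*(n-a) := by omega
    rw [h1, h2]
  have e2 : ∑ a ∈ range (n+1), (catalan (2*a+1) : ℝ) * catalan (2*n+1 - (2*a+1))
      = ∑ a ∈ range (n+1), (catalan (2*a+1) : ℝ) * catalan (2*(n - a)) := by
    apply sum_congr rfl
    intro a ha
    rw [mem_range] at ha
    have h1 : 2*n+1-(2*a+1) = 2*(n-a) := by omega
    rw [h1]
  rw [e1, e2]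
  ring

/-- `E = 1 + 2 X H E`. -/
lemma L2 : Es = 1 + 2 * (X * (Hs * Es)) := by
  ext n
  rw [map_add, coeff_two_mul, PowerSeries.coeff_one]
  cases n with
  | zero => simp [Es]
  | succ m =>
    rw [if_neg (Nat.succ_ne_zero m), coeff_succ_X_mul]
    show (coeff (m+1)) Es = 0 + 2 * (coeff m) (Hs * Es)
    rw [zero_add, show Es = PowerSeries.mk fun n => (catalan (2 * n) : ℝ) from rfl,
      show Hs = PowerSeries.mk fun n => (catalan (2 * n + 1) : ℝ) from rfl, coeff_mul_mk,
      coeff_mk]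
    exact cat_even m

/-- `H = E² + X H²`. -/
lemma L3 : Hs = Es ^ 2 + X * Hs ^ 2 := by
  ext n
  rw [map_add, sq, sq]
  cases n with
  | zero => simp [Hs, Es, coeff_mul_mk, catalan_one]
  | succ m =>
    rw [coeff_succ_X_mul,
      show Es = PowerSeries.mk fun n => (catalan (2 * n) : ℝ) from rfl,
      show Hs = PowerSeries.mk fun n => (catalan (2 * n + 1) : ℝ) from rfl,
      coeff_mul_mk, coeff_mul_mk, coeff_mk]
    have h0 : 2*(m+1)+1 = (2*m+2)+1 := by ring
    rw [h0, catalan_rec]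
    have h1 : (2*m+2)+1 = 2*(m+1)+1 := by ring
    rw [h1, sum_range_even_odd']
    congr 1
    · refine sum_congr rfl fun a ha => ?_
      rw [mem_range] at ha
      have h2 : 2*m+2-2*a = 2*(m+1-a) := by omega
      rw [h2]
    · refine sum_congr rfl fun a ha => ?_
      rw [mem_range] at ha
      have h2 : 2*m+2-(2*a+1) = 2*(m-a)+1 := by omega
      rw [h2]

lemma unitHE : (1 - 2*(X*Hs)) * Es = 1 := by
  linear_combination L2

lemma sq4 : Es^2 = 1 + 4*X*(Es^2)^2 := by
  linear_combination ((1-2*(X*Hs))*Es + 1) * unitHE + (4*X*Es^2) * L3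

noncomputable def c4 : PowerSeries ℝ := PowerSeries.mk fun n => (4^n * catalan n : ℝ)

lemma coeff_four_mul (φ : ℝ⟦X⟧) (m : ℕ) : (coeff m) (4 * φ) = 4 * (coeff m) φ := by
  rw [show (4 : ℝ⟦X⟧) = PowerSeries.C 4 from (map_ofNat _ 4).symm, PowerSeries.coeff_C_mul]

lemma c4_eq : c4 = 1 + 4*X*c4^2 := by
  ext n
  rw [map_add, PowerSeries.coeff_one, mul_assoc, coeff_four_mul, sq]
  cases n with
  | zero => simp [c4]
  | succ m =>
    rw [if_neg (Nat.succ_ne_zero m), coeff_succ_X_mul,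
      show c4 = PowerSeries.mk fun n => (4^n * catalan n : ℝ) from rfl, coeff_mul_mk, coeff_mk]
    rw [catalan_rec, zero_add, Finset.mul_sum, Finset.mul_sum]
    refine sum_congr rfl fun i hi => ?_
    rw [mem_range] at hi
    have h4 : (4:ℝ)^i * 4^(m-i) = 4^m := by rw [← pow_add]; congr 1; omega
    have h5 : (4:ℝ)^(m+1) = 4 * (4^i * 4^(m-i)) := by rw [h4]; ring
    rw [h5]
    ring

lemma uniq4 (Y Z : ℝ⟦X⟧) (hY : Y = 1 + 4*X*Y^2) (hZ : Z = 1 + 4*X*Z^2) : Y = Z := by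
  ext n
  induction n using Nat.strong_induction_on with
  | _ n ih =>
    rw [hY, hZ, map_add, map_add, mul_assoc, mul_assoc, coeff_four_mul, coeff_four_mul]
    congr 1
    cases n with
    | zero => simp
    | succ m =>
      congr 1
      rw [coeff_succ_X_mul, coeff_succ_X_mul, sq, sq, coeff_mul, coeff_mul]
      refine sum_congr rfl fun p hp => ?_
      rw [HasAntidiagonal.mem_antidiagonal] at hp
      rw [ih p.1 (by omega), ih p.2 (by omega)]

lemma EsSq : Es^2 = c4 := uniq4 _ _ sq4 c4_eq

lemma unitsq : (1 - 2*(X*Hs))^2 * c4 = 1 := by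
  rw [← EsSq]
  linear_combination ((1-2*(X*Hs))*Es + 1) * unitHE

lemma geom (z : ℝ⟦X⟧) : ∀ M : ℕ,
    (1-z)^2 * (∑ K ∈ range (M+1), PowerSeries.C ((K:ℝ)+1) * z^K)
      = 1 - PowerSeries.C ((M:ℝ)+2) * z^(M+1) + PowerSeries.C ((M:ℝ)+1) * z^(M+2)
  | 0 => by
    simp only [sum_range_one, Nat.cast_zero, zero_add, map_one, map_add, map_ofNat, map_zero]
    ring
  | (M+1) => by
    rw [sum_range_succ, mul_add, geom z M]
    push_cast
    simp only [map_add, map_one, map_ofNat]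
    ring

lemma keyc4 (M : ℕ) :
    (∑ K ∈ range (M+1), PowerSeries.C ((K:ℝ)+1) * (2*(X*Hs))^K)
      = c4 * (1 - PowerSeries.C ((M:ℝ)+2) * (2*(X*Hs))^(M+1)
          + PowerSeries.C ((M:ℝ)+1) * (2*(X*Hs))^(M+2)) := by
  have h := geom (2*(X*Hs)) M
  have h1 : (1 - 2*(X*Hs))^2 * c4 = 1 := unitsq
  calc (∑ K ∈ range (M+1), PowerSeries.C ((K:ℝ)+1) * (2*(X*Hs))^K)
      = ((1 - 2*(X*Hs))^2 * c4) * (∑ K ∈ range (M+1), PowerSeries.C ((K:ℝ)+1) * (2*(X*Hs))^K) := by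
        rw [h1, one_mul]
    _ = c4 * ((1 - (2*(X*Hs)))^2 * (∑ K ∈ range (M+1), PowerSeries.C ((K:ℝ)+1) * (2*(X*Hs))^K)) := by
        ring
    _ = _ := by rw [h]

lemma coeffkey (M : ℕ) :
    ∑ K ∈ range (M+1), (((K:ℝ)+1)) * (coeff M ((2*(X*Hs))^K)) = 4^M * catalan M := by
  have h := congrArg (coeff M) (keyc4 M)
  rw [map_sum] at h
  simp only [PowerSeries.coeff_C_mul] at h
  rw [h]
  have e1 : c4 * (1 - PowerSeries.C ((M:ℝ)+2) * (2*(X*Hs))^(M+1)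
      + PowerSeries.C ((M:ℝ)+1) * (2*(X*Hs))^(M+2))
      = c4 + ((-(PowerSeries.C ((M:ℝ)+2)) * c4 * (2*Hs)^(M+1)) * X^(M+1)
          + (PowerSeries.C ((M:ℝ)+1) * c4 * (2*Hs)^(M+2)) * X^(M+2)) := by
    ring
  rw [e1, map_add, map_add, PowerSeries.coeff_mul_X_pow', PowerSeries.coeff_mul_X_pow',
    if_neg (by omega), if_neg (by omega), add_zero, add_zero]
  simp [c4]

lemma coeff_pow_congr (φ ψ : ℝ⟦X⟧) (M : ℕ) (h : ∀ j ≤ M, coeff j φ = coeff j ψ) :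
    ∀ (K : ℕ) (j : ℕ), j ≤ M → coeff j (φ^K) = coeff j (ψ^K) := by
  intro K
  induction K with
  | zero => intro j _; simp
  | succ K ih =>
    intro j hj
    rw [pow_succ, pow_succ, coeff_mul, coeff_mul]
    refine sum_congr rfl fun p hp => ?_
    rw [HasAntidiagonal.mem_antidiagonal] at hp
    rw [ih p.1 (by omega), h p.2 (by omega)]

noncomputable def Afin (m : ℕ) : ℝ⟦X⟧ :=
  ∑ i : Fin m, PowerSeries.C (2*(catalan (2*i.1+1):ℝ)) * X^(i.1+1)

lemma coeff_Afin (m j : ℕ) (hj : j ≤ m) : coeff j (Afin m) = coeff j (2*(X*Hs)) := by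
  rw [Afin, map_sum, coeff_two_mul]
  simp only [PowerSeries.coeff_C_mul, PowerSeries.coeff_X_pow, mul_ite, mul_one, mul_zero]
  cases j with
  | zero =>
    rw [show (coeff 0) (X*Hs) = 0 by simp]
    rw [Finset.sum_eq_zero fun i _ => if_neg (by omega)]
    ring
  | succ j' =>
    rw [coeff_succ_X_mul, show Hs = PowerSeries.mk fun n => (catalan (2*n+1) : ℝ) from rfl, coeff_mk]
    rw [Finset.sum_eq_single (⟨j', by omega⟩ : Fin m)]
    · rw [if_pos rfl]
    · intro b _ hb
      exact if_neg fun hc => hb (Fin.ext (show b.1 = j' by omega))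
    · intro hmem; exact absurd (mem_univ _) hmem

lemma coeff_Afin_pow (g K : ℕ) :
    coeff (g-1) ((Afin (g-1))^K)
      = ∑ k ∈ (Finset.piAntidiag (univ : Finset (Fin (g-1))) K).filter
            (fun k => ∑ i, (i.1+1) * k i = g-1),
          (Nat.multinomial univ k : ℝ) * ∏ i : Fin (g-1), (2*(catalan (2*i.1+1):ℝ))^(k i) := by
  rw [Afin, Finset.sum_pow_eq_sum_piAntidiag, map_sum, Finset.sum_filter]
  refine sum_congr rfl fun k hk => ?_
  have e : (Nat.multinomial univ k : ℝ⟦X⟧)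
        * ∏ i : Fin (g-1), (PowerSeries.C (2*(catalan (2*i.1+1):ℝ)) * X^(i.1+1))^(k i)
      = PowerSeries.C ((Nat.multinomial univ k : ℝ)
            * ∏ i : Fin (g-1), (2*(catalan (2*i.1+1):ℝ))^(k i))
          * X^(∑ i : Fin (g-1), (i.1+1) * k i) := by
    simp only [mul_pow, ← map_pow, ← pow_mul]
    rw [prod_mul_distrib, ← map_prod, prod_pow_eq_pow_sum, ← map_natCast (PowerSeries.C (R := ℝ)),
      ← mul_assoc, ← map_mul]
  rw [e, PowerSeries.coeff_C_mul, PowerSeries.coeff_X_pow]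
  by_cases hc : ∑ i : Fin (g-1), (i.1+1) * k i = g-1
  · rw [if_pos hc, if_pos hc.symm, mul_one]
  · rw [if_neg hc, if_neg fun h => hc h.symm, mul_zero]


lemma tuple_sum (g : ℕ) (hg : 1 ≤ g) :
    ∑ k ∈ weightedTuples g, (Nat.multinomial univ k : ℝ) * (((∑ i, k i : ℕ):ℝ)+1)
        * ∏ i : Fin (g-1), (2*(catalan (2*i.1+1):ℝ))^(k i)
      = 4^(g-1) * catalan (g-1) := by
  have main : ∑ K ∈ range g, (((K:ℝ)+1)) * (coeff (g-1) ((2*(X*Hs))^K))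
      = 4^(g-1)*catalan (g-1) := by
    have h := coeffkey (g-1)
    rwa [show (g-1)+1 = g by omega] at h
  rw [← main]
  have hmaps : ∀ k ∈ weightedTuples g, (∑ i, k i) ∈ range g := by
    intro k hk
    rw [weightedTuples, mem_filter] at hk
    rw [mem_range]
    calc ∑ i, k i ≤ ∑ i, (i.1+1) * k i :=
          Finset.sum_le_sum fun i _ => Nat.le_mul_of_pos_left _ (Nat.succ_pos _)
      _ = g - 1 := hk.2
      _ < g := by omega
  rw [← Finset.sum_fiberwise_of_maps_to hmaps]
  refine sum_congr rfl fun K hK => ?_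
  have hset : (weightedTuples g).filter (fun k => ∑ i, k i = K)
      = (Finset.piAntidiag (univ : Finset (Fin (g-1))) K).filter
          (fun k => ∑ i, (i.1+1) * k i = g-1) := by
    ext k
    simp only [weightedTuples, mem_filter, Fintype.mem_piFinset, mem_range,
      Finset.mem_piAntidiag]
    constructor
    · rintro ⟨⟨hlt, hw⟩, hs⟩
      exact ⟨⟨hs, fun i _ => mem_univ i⟩, hw⟩
    · rintro ⟨⟨hs, _⟩, hw⟩
      refine ⟨⟨fun i => ?_, hw⟩, hs⟩
      have h1 : (i.1+1) * k i ≤ ∑ j, (j.1+1) * k j :=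
        Finset.single_le_sum (f := fun j => (j.1+1) * k j) (fun _ _ => Nat.zero_le _) (mem_univ i)
      have h2 : k i ≤ (i.1+1) * k i := Nat.le_mul_of_pos_left _ (Nat.succ_pos _)
      omega
  rw [hset]
  have hA : coeff (g-1) ((2*(X*Hs))^K) = coeff (g-1) ((Afin (g-1))^K) :=
    coeff_pow_congr _ _ (g-1) (fun j hj => (coeff_Afin (g-1) j hj).symm) K (g-1) le_rfl
  rw [hA, coeff_Afin_pow, Finset.mul_sum]
  refine sum_congr rfl fun k hk => ?_
  rw [mem_filter, Finset.mem_piAntidiag] at hk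
  rw [hk.1.1]
  ring

lemma star (g : ℕ) (hg : 1 ≤ g) :
    (catalan (2*g-1) : ℝ)
      = (∑ ℓ ∈ Ico 1 g, (catalan (2*ℓ-1) : ℝ) * (catalan (2*(g-ℓ)-1) : ℝ))
        + ∑ k ∈ weightedTuples g, (Nat.multinomial univ k : ℝ) * (((∑ i, k i : ℕ):ℝ)+1)
            * ∏ i : Fin (g-1), (2*(catalan (2*i.1+1):ℝ))^(k i) := by
  obtain ⟨m, rfl⟩ : ∃ m, g = m+1 := ⟨g-1, by omega⟩
  rw [tuple_sum _ hg]
  have h3 := congrArg (coeff m) L3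
  rw [map_add] at h3
  have hH : (coeff m) Hs = (catalan (2*(m+1)-1) : ℝ) := by
    rw [show Hs = PowerSeries.mk fun n => (catalan (2*n+1) : ℝ) from rfl, coeff_mk]
    have : 2*(m+1)-1 = 2*m+1 := by omega
    rw [this]
  have hE : (coeff m) (Es^2) = 4^((m+1)-1) * (catalan ((m+1)-1) : ℝ) := by
    rw [EsSq, show c4 = PowerSeries.mk fun n => ((4:ℝ)^n * (catalan n : ℝ)) from rfl, coeff_mk]
    simp
  have hX : (coeff m) (X * Hs^2)
      = ∑ ℓ ∈ Ico 1 (m+1), (catalan (2*ℓ-1) : ℝ) * (catalan (2*((m+1)-ℓ)-1) : ℝ) := by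
    cases m with
    | zero => simp
    | succ m' =>
      rw [coeff_succ_X_mul, sq,
        show Hs = PowerSeries.mk fun n => (catalan (2*n+1) : ℝ) from rfl, coeff_mul_mk,
        sum_Ico_eq_sum_range, show (m'+1+1) - 1 = m'+1 from by omega]
      refine (sum_congr rfl fun a ha => ?_).symm
      rw [mem_range] at ha
      have e1 : 2*(1+a)-1 = 2*a+1 := by omega
      have e2 : 2*((m'+1+1)-(1+a))-1 = 2*(m'-a)+1 := by omega
      rw [e1, e2]
  rw [← hH, h3, hE, hX]
  exact add_comm _ _


noncomputable def q : ℕ → ℝ → ℝ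
  | g => fun s =>
    if h : g ≤ 1 then (1 - s^2) * (1 - s)^2 / 4
    else (1/2) * ((∑ ℓ ∈ (Finset.Ico 1 g).attach, q ℓ.1 s * q (g - ℓ.1) s)
      + ((1 - s^2)/2) * ∑ k ∈ weightedTuples g,
          (Nat.multinomial Finset.univ k : ℝ) * (1 - 2*s + ((∑ i, k i : ℕ) : ℝ))
            * ∏ i : Fin (g-1), q (i.1+1) s ^ k i)
  termination_by g => g
  decreasing_by
  · have := ℓ.2; rw [Finset.mem_Ico] at this; omega
  · have := ℓ.2; rw [Finset.mem_Ico] at this; omega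
  · have := i.2; omega

lemma q_eq_of_le (g : ℕ) (hg : g ≤ 1) (s : ℝ) : q g s = (1 - s^2) * (1 - s)^2 / 4 := by
  rw [q]; dsimp only; rw [dif_pos hg]

lemma q_eq (g : ℕ) (hg : 2 ≤ g) (s : ℝ) :
    q g s = (1/2) * ((∑ ℓ ∈ Finset.Ico 1 g, q ℓ s * q (g - ℓ) s)
      + ((1 - s^2)/2) * ∑ k ∈ weightedTuples g,
          (Nat.multinomial Finset.univ k : ℝ) * (1 - 2*s + ((∑ i, k i : ℕ) : ℝ))
            * ∏ i : Fin (g-1), q (i.1+1) s ^ k i) := by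
  rw [q]; dsimp only; rw [dif_neg (by omega : ¬ g ≤ 1)]
  congr 1
  congr 1
  exact Finset.sum_attach (Ico 1 g) (fun ℓ => q ℓ s * q (g - ℓ) s)

lemma q_cont (g : ℕ) : Continuous (q g) := by
  induction g using Nat.strong_induction_on with
  | _ g ih =>
    by_cases hg : g ≤ 1
    · rw [show q g = fun s => (1 - s^2) * (1 - s)^2 / 4 from funext (q_eq_of_le g hg)]
      fun_prop
    · push_neg at hg
      rw [show q g = fun s => (1/2) * ((∑ ℓ ∈ Finset.Ico 1 g, q ℓ s * q (g - ℓ) s)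
          + ((1 - s^2)/2) * ∑ k ∈ weightedTuples g,
              (Nat.multinomial Finset.univ k : ℝ) * (1 - 2*s + ((∑ i, k i : ℕ) : ℝ))
                * ∏ i : Fin (g-1), q (i.1+1) s ^ k i) from funext (q_eq g hg)]
      apply continuous_const.mul
      apply Continuous.add
      · refine continuous_finset_sum _ fun ℓ hℓ => ?_
        rw [mem_Ico] at hℓ
        exact (ih ℓ (by omega)).mul (ih (g - ℓ) (by omega))
      · refine Continuous.mul (by fun_prop) ?_
        refine continuous_finset_sum _ fun k _ => ?_
        refine Continuous.mul (by fun_prop) ?_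
        refine continuous_finset_prod _ fun i _ => ?_
        exact (ih (i.1+1) (by have := i.2; omega)).pow _

lemma q_zero : ∀ g : ℕ, 1 ≤ g → q g 0 = (catalan (2*g-1) : ℝ) / 2^(3*g-1) := by
  intro g
  induction g using Nat.strong_induction_on with
  | _ g ih =>
    intro hg
    by_cases hg1 : g ≤ 1
    · have hgone : g = 1 := by omega
      subst hgone
      rw [q_eq_of_le 1 le_rfl]
      norm_num [catalan_one]
    · push_neg at hg1
      rw [q_eq g hg1]
      have hS1 : (∑ ℓ ∈ Finset.Ico 1 g, q ℓ 0 * q (g - ℓ) 0)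
          = (∑ ℓ ∈ Finset.Ico 1 g, (catalan (2*ℓ-1) : ℝ) * (catalan (2*(g-ℓ)-1) : ℝ))
              / 2^(3*g-2) := by
        rw [Finset.sum_div]
        refine sum_congr rfl fun ℓ hℓ => ?_
        rw [mem_Ico] at hℓ
        rw [ih ℓ (by omega) (by omega), ih (g-ℓ) (by omega) (by omega),
          div_mul_div_comm, ← pow_add]
        congr 2
        omega
      have hS2 : (∑ k ∈ weightedTuples g,
          (Nat.multinomial Finset.univ k : ℝ) * (1 - 2*(0:ℝ) + ((∑ i, k i : ℕ) : ℝ))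
            * ∏ i : Fin (g-1), q (i.1+1) 0 ^ k i)
          = (∑ k ∈ weightedTuples g, (Nat.multinomial univ k : ℝ) * (((∑ i, k i : ℕ):ℝ)+1)
              * ∏ i : Fin (g-1), (2*(catalan (2*i.1+1):ℝ))^(k i)) / 2^(3*g-3) := by
        rw [Finset.sum_div]
        refine sum_congr rfl fun k hk => ?_
        have hw : ∑ i, (i.1+1) * k i = g - 1 := by
          rw [weightedTuples, mem_filter] at hk; exact hk.2
        have key : ∑ i, (3*i.1+2) * k i + ∑ i, k i = 3*g-3 := by
          rw [← Finset.sum_add_distrib]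
          have e1 : ∑ i : Fin (g-1), ((3*i.1+2)*k i + k i) = 3*∑ i, (i.1+1)*k i := by
            rw [Finset.mul_sum]
            exact sum_congr rfl fun i _ => by ring
          rw [e1, hw]
          omega
        have hprod : ∏ i : Fin (g-1), q (i.1+1) 0 ^ k i
            = (∏ i : Fin (g-1), (2*(catalan (2*i.1+1):ℝ))^(k i)) / 2^(3*g-3) := by
          have hq : ∀ i : Fin (g-1), q (i.1+1) 0 = (catalan (2*i.1+1) : ℝ) / 2^(3*i.1+2) := by
            intro i
            rw [ih (i.1+1) (by have := i.2; omega) (by omega),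
              show 2*(i.1+1)-1 = 2*i.1+1 from by omega, show 3*(i.1+1)-1 = 3*i.1+2 from by omega]
          have lhs1 : ∏ i : Fin (g-1), q (i.1+1) 0 ^ k i
              = (∏ i : Fin (g-1), (catalan (2*i.1+1) : ℝ)^(k i)) / 2^(∑ i, (3*i.1+2) * k i) := by
            rw [← prod_pow_eq_pow_sum, ← prod_div_distrib]
            refine prod_congr rfl fun i _ => ?_
            rw [hq i, div_pow, ← pow_mul]
          have rhs1 : ∏ i : Fin (g-1), (2*(catalan (2*i.1+1):ℝ))^(k i)
              = 2^(∑ i, k i) * ∏ i : Fin (g-1), (catalan (2*i.1+1) : ℝ)^(k i) := by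
            rw [← prod_pow_eq_pow_sum, ← prod_mul_distrib]
            exact prod_congr rfl fun i _ => mul_pow _ _ _
          rw [lhs1, rhs1]
          rw [div_eq_div_iff (by positivity) (by positivity)]
          rw [show (2:ℝ)^(3*g-3) = 2^(∑ i, (3*i.1+2) * k i) * 2^(∑ i, k i) from by
            rw [← pow_add, key]]
          ring
        rw [hprod]
        ring
      rw [hS1, hS2, ← sub_eq_zero]
      rw [star g (by omega)]
      obtain ⟨m, rfl⟩ : ∃ m, g = m+2 := ⟨g-2, by omega⟩
      rw [show 3*(m+2)-1 = 3*m+5 from by omega, show 3*(m+2)-2 = 3*m+4 from by omega,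
        show 3*(m+2)-3 = 3*m+3 from by omega]
      field_simp
      ring


lemma EqQ (E : ℕ → ℝ → ℝ)
    (hE1 : ∀ t : ℝ, t < 1 / 2 →
      E 1 t = t * U16 t ^ 2 / (2 * (1 - U16 t) ^ 3))
    (hrec : ∀ g, 2 ≤ g → ∀ t : ℝ, t < 1 / 2 →
      E g t = (1 / (2 * (1 - U16 t))) *
        ((∑ ℓ ∈ Finset.Ico 1 g, E ℓ t * E (g - ℓ) t)
         + t * ∑ k ∈ weightedTuples g,
             (Nat.multinomial Finset.univ k : ℝ) *
               ((2 * U16 t + ((∑ i, k i : ℕ) : ℝ) - 1) / (1 - U16 t) ^ ((∑ i, k i) + 2)) *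
               ∏ ℓ : Fin (g - 1), E (ℓ.1 + 1) t ^ k ℓ)) :
    ∀ g : ℕ, 1 ≤ g → ∀ t : ℝ, t < 1/2 →
      E g t * (Real.sqrt (1 - 2*t))^(4*g-1) = q g (Real.sqrt (1 - 2*t)) := by
  intro g
  induction g using Nat.strong_induction_on with
  | _ g ih =>
    intro hg t ht
    set s := Real.sqrt (1 - 2*t) with hsdef
    have hspos : 0 < s := Real.sqrt_pos.mpr (by linarith)
    have hsne : s ≠ 0 := ne_of_gt hspos
    have hs2 : s^2 = 1 - 2*t := Real.sq_sqrt (by linarith)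
    have h1U : 1 - U16 t = s := by rw [U16]; ring
    have hU : U16 t = 1 - s := by rw [← h1U]; ring
    have htt : t = (1 - s^2)/2 := by rw [hs2]; ring
    by_cases hg1 : g ≤ 1
    · have hgone : g = 1 := by omega
      subst hgone
      rw [hE1 t ht, q_eq_of_le 1 le_rfl, h1U, hU, htt]
      field_simp
      ring
    · push_neg at hg1
      have hP : s^(4*g-2) * (∑ ℓ ∈ Finset.Ico 1 g, E ℓ t * E (g-ℓ) t)
          = ∑ ℓ ∈ Finset.Ico 1 g, q ℓ s * q (g-ℓ) s := by
        rw [Finset.mul_sum]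
        refine sum_congr rfl fun ℓ hℓ => ?_
        rw [mem_Ico] at hℓ
        have e : s^(4*g-2) = s^(4*ℓ-1) * s^(4*(g-ℓ)-1) := by
          rw [← pow_add]; congr 1; omega
        calc s^(4*g-2) * (E ℓ t * E (g-ℓ) t)
            = (E ℓ t * s^(4*ℓ-1)) * (E (g-ℓ) t * s^(4*(g-ℓ)-1)) := by rw [e]; ring
          _ = q ℓ s * q (g-ℓ) s := by
              rw [ih ℓ (by omega) (by omega) t ht, ih (g-ℓ) (by omega) (by omega) t ht]
      have hT : ∀ k ∈ weightedTuples g,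
          s^(4*g-2) * ((Nat.multinomial Finset.univ k : ℝ) *
              ((2 * U16 t + ((∑ i, k i : ℕ) : ℝ) - 1) / (1 - U16 t) ^ ((∑ i, k i) + 2)) *
              ∏ ℓ : Fin (g - 1), E (ℓ.1 + 1) t ^ k ℓ)
            = (Nat.multinomial Finset.univ k : ℝ) * (1 - 2*s + ((∑ i, k i : ℕ) : ℝ))
                * ∏ i : Fin (g-1), q (i.1+1) s ^ k i := by
        intro k hk
        have hw : ∑ i, (i.1+1) * k i = g - 1 := by
          rw [weightedTuples, mem_filter] at hk; exact hk.2
        have key : (∑ i, k i + 2) + ∑ i, (4*i.1+3) * k i = 4*g-2 := by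
          have e1 : ∑ i : Fin (g-1), ((4*i.1+3) * k i + k i) = 4*(g-1) := by
            rw [show (4*(g-1)) = 4 * ∑ i, (i.1+1)*k i from by rw [hw], Finset.mul_sum]
            exact sum_congr rfl fun i _ => by ring
          rw [Finset.sum_add_distrib] at e1
          omega
        have hsplit : s^(4*g-2) = s^((∑ i, k i) + 2) * s^(∑ i, (4*i.1+3) * k i) := by
          rw [← pow_add, key]
        have hprod : s^(∑ i, (4*i.1+3) * k i) * ∏ ℓ : Fin (g - 1), E (ℓ.1 + 1) t ^ k ℓ
            = ∏ i : Fin (g-1), q (i.1+1) s ^ k i := by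
          rw [← prod_pow_eq_pow_sum, ← prod_mul_distrib]
          refine prod_congr rfl fun i _ => ?_
          rw [pow_mul, ← mul_pow]
          congr 1
          rw [mul_comm, show (4*i.1+3) = 4*(i.1+1)-1 from by omega]
          exact ih (i.1+1) (by have := i.2; omega) (by omega) t ht
        rw [h1U, hU, hsplit, ← hprod]
        have hne : s^((∑ i, k i) + 2) ≠ 0 := pow_ne_zero _ hsne
        field_simp
        ring
      rw [hrec g hg1 t ht, q_eq g hg1]
      have houter : s^(4*g-1) = s * s^(4*g-2) := by
        rw [← pow_succ']; congr 1; omega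
      rw [houter]
      have hTsum : s^(4*g-2) * (∑ k ∈ weightedTuples g,
            (Nat.multinomial Finset.univ k : ℝ) *
              ((2 * U16 t + ((∑ i, k i : ℕ) : ℝ) - 1) / (1 - U16 t) ^ ((∑ i, k i) + 2)) *
              ∏ ℓ : Fin (g - 1), E (ℓ.1 + 1) t ^ k ℓ)
          = ∑ k ∈ weightedTuples g,
              (Nat.multinomial Finset.univ k : ℝ) * (1 - 2*s + ((∑ i, k i : ℕ) : ℝ))
                * ∏ i : Fin (g-1), q (i.1+1) s ^ k i := by
        rw [Finset.mul_sum]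
        exact sum_congr rfl hT
      have step : ∀ P T : ℝ, 1/(2*(1 - U16 t)) * (P + t*T) * (s*s^(4*g-2))
          = (1/2)*(s^(4*g-2)*P + t*(s^(4*g-2)*T)) := by
        intro P T
        rw [h1U]
        field_simp
      rw [step, hP, hTsum, htt]

lemma natnum (m : ℕ) :
    catalan (2*m+1) * (2*m+2).factorial = (4*m+1).doubleFactorial * 2^(2*m+1) := by
  apply Nat.eq_of_mul_eq_mul_right (Nat.factorial_pos (2*m+1))
  calc catalan (2*m+1) * (2*m+2).factorial * (2*m+1).factorial
      = ((2*m+1+1) * catalan (2*m+1)) * ((2*m+1).factorial * (2*m+1).factorial) := by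
        rw [show (2*m+2).factorial = (2*m+2) * (2*m+1).factorial from Nat.factorial_succ (2*m+1)]
        ring
    _ = (2*m+1).centralBinom * ((2*m+1).factorial * (2*m+1).factorial) := by
        rw [succ_mul_catalan_eq_centralBinom]
    _ = (4*m+2).factorial := by
        rw [Nat.centralBinom]
        have h := Nat.choose_mul_factorial_mul_factorial
          (show 2*m+1 ≤ 2*(2*m+1) from by omega)
        rw [show 2*(2*m+1) - (2*m+1) = 2*m+1 from by omega] at h
        rw [← mul_assoc, h]
        congr 1
        omega
    _ = (4*m+2).doubleFactorial * (4*m+1).doubleFactorial := Nat.factorial_eq_mul_doubleFactorial (4*m+1)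
    _ = (4*m+1).doubleFactorial * 2^(2*m+1) * (2*m+1).factorial := by
        rw [show 4*m+2 = 2*(2*m+1) from by ring, Nat.doubleFactorial_two_mul]
        ring


/-- If `E g` is the exponential generating function of leaf-labeled simplex time-consistent
galled trees with `g` galls, given on `t < 1/2` by `E 1 t = t·U(t)²/(2(1−U(t))³)` and the
stated recursion for `g ≥ 2`, then for every `g ≥ 1`,
`(1−2t)^{2g−1/2}·E g t → (4g−3)!!/((2g)!·2^g)` as `t → 1/2⁻`. -/
theorem stmt16 (E : ℕ → ℝ → ℝ)
    (hE1 : ∀ t : ℝ, t < 1 / 2 →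
      E 1 t = t * U16 t ^ 2 / (2 * (1 - U16 t) ^ 3))
    (hrec : ∀ g, 2 ≤ g → ∀ t : ℝ, t < 1 / 2 →
      E g t = (1 / (2 * (1 - U16 t))) *
        ((∑ ℓ ∈ Finset.Ico 1 g, E ℓ t * E (g - ℓ) t)
         + t * ∑ k ∈ weightedTuples g,
             (Nat.multinomial Finset.univ k : ℝ) *
               ((2 * U16 t + ((∑ i, k i : ℕ) : ℝ) - 1) / (1 - U16 t) ^ ((∑ i, k i) + 2)) *
               ∏ ℓ : Fin (g - 1), E (ℓ.1 + 1) t ^ k ℓ)) :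
    ∀ g : ℕ, 1 ≤ g →
      Filter.Tendsto (fun t : ℝ => (1 - 2 * t) ^ (2 * (g : ℝ) - 1 / 2) * E g t)
        (nhdsWithin (1 / 2) (Set.Iio (1 / 2)))
        (nhds ((Nat.doubleFactorial (4 * g - 3) : ℝ)
          / ((Nat.factorial (2 * g) : ℝ) * 2 ^ g))) := by
  intro g hg
  have h1 : Filter.Tendsto (fun t : ℝ => Real.sqrt (1 - 2*t))
      (nhdsWithin (1/2) (Set.Iio (1/2))) (nhds 0) := by
    have hc : Continuous fun t : ℝ => Real.sqrt (1 - 2*t) := by fun_prop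
    have h0 := hc.tendsto (1/2 : ℝ)
    have : Real.sqrt (1 - 2*(1/2 : ℝ)) = 0 := by norm_num
    rw [this] at h0
    exact tendsto_nhdsWithin_of_tendsto_nhds h0
  have h2 : Filter.Tendsto (fun t : ℝ => q g (Real.sqrt (1 - 2*t)))
      (nhdsWithin (1/2) (Set.Iio (1/2))) (nhds (q g 0)) :=
    ((q_cont g).tendsto 0).comp h1
  have hval : q g 0 = (Nat.doubleFactorial (4 * g - 3) : ℝ)
      / ((Nat.factorial (2 * g) : ℝ) * 2 ^ g) := by
    rw [q_zero g hg]
    obtain ⟨m, rfl⟩ : ∃ m, g = m+1 := ⟨g-1, by omega⟩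
    rw [div_eq_div_iff (by positivity) (by positivity),
      show 2*(m+1)-1 = 2*m+1 from by omega, show 4*(m+1)-3 = 4*m+1 from by omega,
      show 3*(m+1)-1 = 3*m+2 from by omega, show 2*(m+1) = 2*m+2 from by ring]
    have hnat : (catalan (2*m+1) : ℝ) * (2*m+2).factorial = ((4*m+1).doubleFactorial : ℝ) * 2^(2*m+1) := by
      exact_mod_cast congrArg (Nat.cast : ℕ → ℝ) (natnum m)
    calc (catalan (2*m+1) : ℝ) * ((2*m+2).factorial * 2^(m+1))
        = ((catalan (2*m+1) : ℝ) * (2*m+2).factorial) * 2^(m+1) := by ring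
      _ = (((4*m+1).doubleFactorial : ℝ) * 2^(2*m+1)) * 2^(m+1) := by rw [hnat]
      _ = ((4*m+1).doubleFactorial : ℝ) * 2^(3*m+2) := by
          rw [mul_assoc, ← pow_add]
          congr 2
          omega
  rw [← hval]
  refine h2.congr' ?_
  filter_upwards [self_mem_nhdsWithin] with t ht
  have ht2 : t < 1/2 := ht
  have hE := EqQ E hE1 hrec g hg t ht2
  have hpos : (0:ℝ) < 1 - 2*t := by linarith
  have hr : (1 - 2*t) ^ (2*(g:ℝ) - 1/2) = (Real.sqrt (1 - 2*t))^(4*g-1) := by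
    rw [Real.sqrt_eq_rpow, ← Real.rpow_natCast ((1 - 2*t)^((1:ℝ)/2)) (4*g-1),
      ← Real.rpow_mul (le_of_lt hpos)]
    congr 1
    push_cast [Nat.cast_sub (show 1 ≤ 4*g from by omega)]
    ring
  rw [← hE, hr]
  ring
end
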